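/- Second-order Taylor decomposition of the logistic negative log-likelihood with cubic remainder bound. Fix n ≥ 1, data x_1, …, x_n ∈ ℝ^p and a_1, …, a_n ∈ {0,1}, and vectors α*, b ∈ ℝ^p. Then ℓ_n(α* + b/√n) − ℓ_n(α*) = −Σ_{i=1}^n (a_i − φ'(x_iᵀα*)) (x_iᵀb)/√n + (1/(2n)) Σ_{i=1}^n φ''(x_iᵀα*)(x_iᵀb)² + R_n, where the remainder satisfies |R_n| ≤ (√3/108) n^{−3/2} Σ_{i=1}^n |x_iᵀb|³. -/

import Mathlib

open Filter
open scoped RealInnerProductSpace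

/-- The logistic log-partition function `φ(t) = log(1 + exp t)`. -/
noncomputable def phi (t : ℝ) : ℝ := Real.log (1 + Real.exp t)

/-- `φ'(t) = exp t / (1 + exp t)`. -/
noncomputable def phiD1 (t : ℝ) : ℝ := Real.exp t / (1 + Real.exp t)

/-- `φ''(t) = exp t / (1 + exp t)^2`. -/
noncomputable def phiD2 (t : ℝ) : ℝ := Real.exp t / (1 + Real.exp t) ^ 2

/-- The logistic negative log-likelihood
`ℓ_n(α) = ∑ i, [−a_i (x_iᵀα) + φ(x_iᵀα)]`. -/
noncomputable def negLogLik {p n : ℕ} (x : Fin n → EuclideanSpace ℝ (Fin p))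
    (a : Fin n → ℝ) (α : EuclideanSpace ℝ (Fin p)) : ℝ :=
  ∑ i, (-(a i) * ⟪x i, α⟫ + phi ⟪x i, α⟫)

noncomputable def phiD3 (t : ℝ) : ℝ := Real.exp t * (1 - Real.exp t) / (1 + Real.exp t) ^ 3

lemma expPos (t : ℝ) : (0:ℝ) < 1 + Real.exp t := by positivity

lemma hasDerivAt_phi (t : ℝ) : HasDerivAt phi (phiD1 t) t := by
  have h : HasDerivAt (fun u => 1 + Real.exp u) (Real.exp t) t :=
    (Real.hasDerivAt_exp t).const_add 1
  exact h.log (expPos t).ne'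

lemma hasDerivAt_phiD1 (t : ℝ) : HasDerivAt phiD1 (phiD2 t) t := by
  have h : HasDerivAt (fun u => 1 + Real.exp u) (Real.exp t) t :=
    (Real.hasDerivAt_exp t).const_add 1
  have h2 := (Real.hasDerivAt_exp t).div h (expPos t).ne'
  refine h2.congr_deriv ?_
  unfold phiD2
  field_simp
  ring

lemma hasDerivAt_phiD2 (t : ℝ) : HasDerivAt phiD2 (phiD3 t) t := by
  have h : HasDerivAt (fun u => 1 + Real.exp u) (Real.exp t) t :=
    (Real.hasDerivAt_exp t).const_add 1
  have hp : HasDerivAt (fun u => (1 + Real.exp u) ^ 2)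
      ((2 : ℕ) * (1 + Real.exp t) ^ 1 * Real.exp t) t := h.pow 2
  have h2 := (Real.hasDerivAt_exp t).div hp (by positivity)
  refine h2.congr_deriv ?_
  unfold phiD3
  rw [div_eq_div_iff (by positivity) (by positivity)]
  ring

lemma abs_phiD3_le (t : ℝ) : |phiD3 t| ≤ Real.sqrt 3 / 18 := by
  have hupos : 0 < Real.exp t := Real.exp_pos t
  unfold phiD3
  set u := Real.exp t with hu
  have hpos : (0:ℝ) < (1 + u) ^ 3 := by positivity
  have hs : Real.sqrt 3 ^ 2 = 3 := Real.sq_sqrt (by norm_num)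
  have hspos : 0 < Real.sqrt 3 := Real.sqrt_pos.2 (by norm_num)
  rw [abs_div, abs_of_pos hpos, div_le_div_iff₀ hpos (by norm_num)]
  have hv : |u * (1 - u)| ^ 2 = (u * (1 - u)) ^ 2 := sq_abs _
  have hvnn : 0 ≤ |u * (1 - u)| := abs_nonneg _
  have key : 324 * (u * (1 - u)) ^ 2 ≤ 3 * ((1 + u) ^ 3) ^ 2 := by
    nlinarith [mul_nonneg (sq_nonneg (u ^ 2 - 4 * u + 1))
      (by positivity : (0:ℝ) ≤ u ^ 2 + 14 * u + 1)]
  nlinarith [mul_pos hspos hpos, hv, hvnn, key, hs]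

lemma taylor2_bound (t h : ℝ) :
    |phi (t + h) - phi t - phiD1 t * h - phiD2 t * h ^ 2 / 2| ≤
      Real.sqrt 3 / 108 * |h| ^ 3 := by
  rcases eq_or_ne h 0 with rfl | hne
  · simp
  have hHpos : 0 < |h| := abs_pos.2 hne
  set H : ℝ := |h| with hH
  set ε : ℝ := h / H with hε
  have hεH : ε * H = h := div_mul_cancel₀ h hHpos.ne'
  have hε2 : ε * ε = 1 := by
    rw [hε, div_mul_div_comm, hH, abs_mul_abs_self, div_self (mul_self_ne_zero.2 hne)]
  have hεabs : |ε| = 1 := by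
    rw [hε, abs_div, abs_abs, div_self hHpos.ne']
  set F : ℝ → ℝ := fun s => phi (t + ε * s) with hF
  set F1 : ℝ → ℝ := fun s => ε * phiD1 (t + ε * s) with hF1
  set F2 : ℝ → ℝ := fun s => phiD2 (t + ε * s) with hF2
  set F3 : ℝ → ℝ := fun s => ε * phiD3 (t + ε * s) with hF3
  have hin : ∀ s : ℝ, HasDerivAt (fun u => t + ε * u) ε s := fun s => by
    simpa using ((hasDerivAt_id s).const_mul ε).const_add t
  have hdF : ∀ s, HasDerivAt F (F1 s) s := fun s => by
    have h' := (hasDerivAt_phi (t + ε * s)).comp s (hin s)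
    rw [mul_comm (phiD1 _) ε] at h'
    exact h' 
  have hdF1 : ∀ s, HasDerivAt F1 (F2 s) s := fun s => by
    have := ((hasDerivAt_phiD1 (t + ε * s)).comp s (hin s)).const_mul ε
    have heq : ε * (phiD2 (t + ε * s) * ε) = F2 s := by
      rw [hF2]; rw [mul_comm (phiD2 _) ε, ← mul_assoc, hε2, one_mul]
    simpa [heq] using this
  have hdF2 : ∀ s, HasDerivAt F2 (F3 s) s := fun s => by
    have h' := (hasDerivAt_phiD2 (t + ε * s)).comp s (hin s)
    rw [mul_comm (phiD3 _) ε] at h'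
    exact h' 
  -- smoothness
  have hphiCD : ContDiff ℝ 2 phi := by
    have h1 : ContDiff ℝ 2 (fun u : ℝ => 1 + Real.exp u) :=
      contDiff_const.add Real.contDiff_exp
    exact h1.log fun u => (expPos u).ne'
  have hFCD : ContDiff ℝ 2 F :=
    hphiCD.comp (contDiff_const.add (contDiff_const.mul contDiff_id))
  set s : Set ℝ := Set.Icc 0 H with hsdef
  have hs : UniqueDiffOn ℝ s := uniqueDiffOn_Icc hHpos
  have e1 : ∀ y ∈ s, iteratedDerivWithin 1 F s y = F1 y := fun y hy => by
    rw [iteratedDerivWithin_one]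
    exact (hdF y).hasDerivWithinAt.derivWithin (hs y hy)
  have e2 : ∀ y ∈ s, iteratedDerivWithin 2 F s y = F2 y := fun y hy => by
    rw [show (2:ℕ) = 1 + 1 from rfl, iteratedDerivWithin_succ,
      derivWithin_congr (fun z hz => e1 z hz) (e1 y hy)]
    exact (hdF1 y).hasDerivWithinAt.derivWithin (hs y hy)
  have e3 : ∀ y ∈ s, iteratedDerivWithin 3 F s y = F3 y := fun y hy => by
    rw [show (3:ℕ) = 2 + 1 from rfl, iteratedDerivWithin_succ,
      derivWithin_congr (fun z hz => e2 z hz) (e2 y hy)]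
    exact (hdF2 y).hasDerivWithinAt.derivWithin (hs y hy)
  have hdiff : DifferentiableOn ℝ (iteratedDerivWithin 2 F s) (Set.Ioo 0 H) := by
    have : DifferentiableOn ℝ F2 (Set.Ioo 0 H) :=
      fun y _ => ((hdF2 y).differentiableAt).differentiableWithinAt
    exact this.congr fun y hy => e2 y (Set.Ioo_subset_Icc_self hy)
  obtain ⟨x', hx', hform⟩ := taylor_mean_remainder_lagrange (n := 2) hHpos.ne
    (by rw [Set.uIcc_of_le hHpos.le]; exact hFCD.contDiffOn)
    (by rw [Set.uIcc_of_le hHpos.le, Set.uIoo_of_le hHpos.le]; exact hdiff)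
  rw [Set.uIcc_of_le hHpos.le, ← hsdef] at hform
  rw [Set.uIoo_of_le hHpos.le] at hx'
  -- compute the Taylor polynomial
  have h0s : (0:ℝ) ∈ s := Set.left_mem_Icc.2 hHpos.le
  have htp : taylorWithinEval F 2 s 0 H =
      phi t + phiD1 t * h + phiD2 t * h ^ 2 / 2 := by
    rw [taylor_within_apply]
    rw [Finset.sum_range_succ, Finset.sum_range_succ, Finset.sum_range_one]
    rw [iteratedDerivWithin_zero, e1 0 h0s, e2 0 h0s]
    have hH2 : H ^ 2 = h ^ 2 := by rw [hH, sq_abs]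
    simp only [hF, hF1, hF2, mul_zero, add_zero, sub_zero, smul_eq_mul]
    rw [hH2]
    have : H * (ε * phiD1 t) = phiD1 t * h := by rw [← hεH]; ring
    norm_num [Nat.factorial]
    rw [← hεH]; ring
  have hFH : F H = phi (t + h) := by rw [hF]; simp [hεH]
  rw [hFH, htp] at hform
  have hbound : |iteratedDerivWithin 3 F s x'| ≤ Real.sqrt 3 / 18 := by
    rw [e3 x' (Set.Ioo_subset_Icc_self hx'), hF3, abs_mul, hεabs, one_mul]
    exact abs_phiD3_le _
  norm_num [Nat.factorial] at hform
  have : phi (t + h) - phi t - phiD1 t * h - phiD2 t * h ^ 2 / 2 =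
      iteratedDerivWithin 3 F s x' * (H - 0) ^ 3 / 6 := by
    linarith [hform]
  rw [this]
  rw [abs_div, abs_mul, abs_of_nonneg (by norm_num : (0:ℝ) ≤ 6)]
  have hH3 : |(H - 0) ^ 3| = |h| ^ 3 := by rw [sub_zero, abs_pow, abs_abs]
  rw [hH3, div_le_iff₀ (by norm_num : (0:ℝ) < 6)]
  calc |iteratedDerivWithin 3 F s x'| * |h| ^ 3
      ≤ Real.sqrt 3 / 18 * |h| ^ 3 := by
        exact mul_le_mul_of_nonneg_right hbound (by positivity)
    _ = Real.sqrt 3 / 108 * |h| ^ 3 * 6 := by ring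

/-- Second-order Taylor decomposition of the logistic negative log-likelihood
with cubic remainder bound (constant `√3/108`). -/
theorem negLogLik_taylor_expansion_cubic_remainder
    {p n : ℕ} (hn : 1 ≤ n)
    (x : Fin n → EuclideanSpace ℝ (Fin p)) (a : Fin n → ℝ)
    (ha : ∀ i, a i = 0 ∨ a i = 1)
    (αstar b : EuclideanSpace ℝ (Fin p)) :
    ∃ R : ℝ,
      negLogLik x a (αstar + (Real.sqrt n)⁻¹ • b) - negLogLik x a αstar =
        -(∑ i, (a i - phiD1 ⟪x i, αstar⟫) * ⟪x i, b⟫ / Real.sqrt n)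
        + (1 / (2 * (n : ℝ))) * ∑ i, phiD2 ⟪x i, αstar⟫ * ⟪x i, b⟫ ^ 2
        + R ∧
      |R| ≤ (Real.sqrt 3 / 108) * ((n : ℝ) ^ ((3 : ℝ) / 2))⁻¹
        * ∑ i, |⟪x i, b⟫| ^ 3 := by
  have hnpos : (0:ℝ) < (n:ℝ) := by exact_mod_cast hn
  have hsqpos : 0 < Real.sqrt n := Real.sqrt_pos.2 hnpos
  set σ : ℝ := (Real.sqrt n)⁻¹ with hσ
  have hσpos : 0 < σ := inv_pos.2 hsqpos
  have hσ2 : σ ^ 2 = (n:ℝ)⁻¹ := by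
    rw [hσ, inv_pow, Real.sq_sqrt hnpos.le]
  set t : Fin n → ℝ := fun i => ⟪x i, αstar⟫ with ht
  set c : Fin n → ℝ := fun i => ⟪x i, b⟫ with hc
  have hinner : ∀ i, ⟪x i, αstar + σ • b⟫ = t i + σ * c i := fun i => by
    rw [inner_add_right, real_inner_smul_right]
  refine ⟨∑ i, (phi (t i + σ * c i) - phi (t i) - phiD1 (t i) * (σ * c i)
      - phiD2 (t i) * (σ * c i) ^ 2 / 2), ?_, ?_⟩
  · unfold negLogLik
    rw [← Finset.sum_sub_distrib, ← Finset.sum_neg_distrib, Finset.mul_sum,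
      ← Finset.sum_add_distrib, ← Finset.sum_add_distrib]
    refine Finset.sum_congr rfl fun i _ => ?_
    rw [hinner i]
    have hdiv : (a i - phiD1 (t i)) * c i / Real.sqrt n
        = (a i - phiD1 (t i)) * c i * σ := by
      rw [div_eq_mul_inv, hσ]
    rw [hdiv]
    linear_combination (phiD2 (t i) * c i ^ 2 / 2) * hσ2
  · calc |∑ i, (phi (t i + σ * c i) - phi (t i) - phiD1 (t i) * (σ * c i)
        - phiD2 (t i) * (σ * c i) ^ 2 / 2)|
        ≤ ∑ i, |phi (t i + σ * c i) - phi (t i) - phiD1 (t i) * (σ * c i)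
          - phiD2 (t i) * (σ * c i) ^ 2 / 2| := Finset.abs_sum_le_sum_abs _ _
      _ ≤ ∑ i, Real.sqrt 3 / 108 * (σ ^ 3 * |c i| ^ 3) := by
          refine Finset.sum_le_sum fun i _ => ?_
          have := taylor2_bound (t i) (σ * c i)
          have habs : |σ * c i| ^ 3 = σ ^ 3 * |c i| ^ 3 := by
            rw [abs_mul, abs_of_pos hσpos, mul_pow]
          rwa [habs] at this
      _ = Real.sqrt 3 / 108 * ((n : ℝ) ^ ((3 : ℝ) / 2))⁻¹ * ∑ i, |c i| ^ 3 := by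
          have hpow : ((n : ℝ) ^ ((3 : ℝ) / 2))⁻¹ = σ ^ 3 := by
            have h1 : (n : ℝ) ^ ((3 : ℝ) / 2) = Real.sqrt n ^ 3 := by
              rw [Real.sqrt_eq_rpow, ← Real.rpow_natCast ((n:ℝ) ^ ((1:ℝ)/2)) 3,
                ← Real.rpow_mul hnpos.le]
              norm_num
            rw [h1, hσ, inv_pow]
          rw [hpow, Finset.mul_sum]
          exact Finset.sum_congr rfl fun i _ => by ring
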